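/- Let (S, I, O, δ, λ) be a deterministic Mealy machine with finite state set S of cardinality n, transition function δ : S × I → S and output function λ : S × I → O, and let δ* : S × I* → S and λ* : S × I* → O* be their canonical extensions to input words. Suppose the machine is reduced: for every pair of distinct states s ≠ s' there exists a word w ∈ I* with λ*(s, w) ≠ λ*(s', w). Then there exists a homing sequence of length at most (n−1)², i.e. a word σ ∈ I* with |σ| ≤ (n−1)² such that for all states s, s', if λ*(s, σ) = λ*(s', σ) then δ*(s, σ) = δ*(s', σ). -/

import Mathlib

/-- Canonical extension of the transition function of a Mealy machine to input words:
`mealyDelta δ s w` is the state reached after reading the word `w` from state `s`. -/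
def mealyDelta {S I : Type*} (δ : S → I → S) : S → List I → S
  | s, [] => s
  | s, a :: w => mealyDelta δ (δ s a) w

/-- Canonical extension of the output function of a Mealy machine to input words:
`mealyLambda δ lam s w` is the output word produced while reading the word `w` from
state `s`. -/
def mealyLambda {S I O : Type*} (δ : S → I → S) (lam : S → I → O) :
    S → List I → List O
  | _, [] => []
  | s, a :: w => lam s a :: mealyLambda δ lam (δ s a) w

open scoped Classical

section Aux

variable {S I O : Type*} (δ : S → I → S) (lam : S → I → O)

lemma mealyDelta_append (s : S) (u v : List I) :
    mealyDelta δ s (u ++ v) = mealyDelta δ (mealyDelta δ s u) v := by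
  induction u generalizing s with
  | nil => simp [mealyDelta]
  | cons a u ih => simp [mealyDelta, ih]

lemma mealyLambda_append (s : S) (u v : List I) :
    mealyLambda δ lam s (u ++ v) =
      mealyLambda δ lam s u ++ mealyLambda δ lam (mealyDelta δ s u) v := by
  induction u generalizing s with
  | nil => simp [mealyLambda, mealyDelta]
  | cons a u ih => simp [mealyLambda, mealyDelta, ih]

lemma mealyLambda_length (s : S) (u : List I) :
    (mealyLambda δ lam s u).length = u.length := by
  induction u generalizing s with
  | nil => simp [mealyLambda]
  | cons a u ih => simp [mealyLambda, ih]

/-- `mealyE δ lam k s s'` : states `s, s'` give equal outputs on all words of length ≤ k. -/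
def mealyE (k : ℕ) (s s' : S) : Prop :=
  ∀ w : List I, w.length ≤ k → mealyLambda δ lam s w = mealyLambda δ lam s' w

lemma mealyE_refl (k : ℕ) (s : S) : mealyE δ lam k s s := fun _ _ => rfl

lemma mealyE_symm {k : ℕ} {s s' : S} (h : mealyE δ lam k s s') : mealyE δ lam k s' s :=
  fun w hw => (h w hw).symm

lemma mealyE_trans {k : ℕ} {s s' s'' : S} (h : mealyE δ lam k s s')
    (h' : mealyE δ lam k s' s'') : mealyE δ lam k s s'' :=
  fun w hw => (h w hw).trans (h' w hw)

lemma mealyE_anti {k k' : ℕ} (hk : k ≤ k') {s s' : S} (h : mealyE δ lam k' s s') :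
    mealyE δ lam k s s' := fun w hw => h w (hw.trans hk)

lemma mealyE_succ_iff {k : ℕ} {s s' : S} :
    mealyE δ lam (k + 1) s s' ↔
      ∀ a : I, lam s a = lam s' a ∧ mealyE δ lam k (δ s a) (δ s' a) := by
  constructor
  · intro h a
    constructor
    · have := h [a] (by simp)
      simpa [mealyLambda] using this
    · intro w hw
      have h2 := h (a :: w) (by simp; omega)
      simp only [mealyLambda, List.cons.injEq] at h2
      exact h2.2
  · intro h w hw
    cases w with
    | nil => rfl
    | cons a w =>
      simp only [mealyLambda]
      rw [(h a).1, (h a).2 w (by simp only [List.length_cons] at hw; omega)]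

lemma mealyE_stable {k : ℕ}
    (hstab : ∀ s s' : S, mealyE δ lam k s s' → mealyE δ lam (k + 1) s s') :
    ∀ j, ∀ s s' : S, mealyE δ lam k s s' → mealyE δ lam (k + j) s s' := by
  intro j
  induction j with
  | zero => intro s s' h; exact h
  | succ j ih =>
    intro s s' h
    have h1 := hstab s s' h
    rw [mealyE_succ_iff] at h1
    have : mealyE δ lam (k + j + 1) s s' := by
      rw [mealyE_succ_iff]
      intro a
      exact ⟨(h1 a).1, ih _ _ (h1 a).2⟩
    exact this

/-- class of `s` under `mealyE k`. -/
def mealyCls (k : ℕ) (s : S) : Set S := {t | mealyE δ lam k s t}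

lemma mealyCls_eq_of {k : ℕ} {s s' : S} (h : mealyE δ lam k s s') :
    mealyCls δ lam k s = mealyCls δ lam k s' := by
  ext t
  exact ⟨fun ht => mealyE_trans δ lam (mealyE_symm δ lam h) ht,
         fun ht => mealyE_trans δ lam h ht⟩

noncomputable def mealyClsCount [Fintype S] (k : ℕ) : ℕ :=
  (Finset.univ.image (mealyCls δ lam k)).card

lemma card_image_lt_of_not_injOn {α β : Type*} [DecidableEq β] {s : Finset α}
    {f : α → β} {x y : α} (hx : x ∈ s) (hy : y ∈ s) (hxy : x ≠ y) (hf : f x = f y) :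
    (s.image f).card < s.card := by
  have h1 : s.image f ⊆ (s.erase x).image f := by
    intro z hz
    rcases Finset.mem_image.1 hz with ⟨a, ha, rfl⟩
    by_cases hax : a = x
    · exact Finset.mem_image.2 ⟨y, Finset.mem_erase.2 ⟨hxy.symm, hy⟩, by rw [hax, hf]⟩
    · exact Finset.mem_image.2 ⟨a, Finset.mem_erase.2 ⟨hax, ha⟩, rfl⟩
  calc (s.image f).card ≤ ((s.erase x).image f).card := Finset.card_le_card h1
    _ ≤ (s.erase x).card := Finset.card_image_le
    _ < s.card := Finset.card_erase_lt_of_mem hx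

lemma mealyClsCount_le [Fintype S] (k : ℕ) : mealyClsCount δ lam k ≤ Fintype.card S := by
  calc mealyClsCount δ lam k ≤ Finset.univ.card := Finset.card_image_le
    _ = Fintype.card S := Finset.card_univ

lemma mealyClsCount_lt [Fintype S] {k : ℕ} {s s' : S}
    (h : mealyE δ lam k s s') (h' : ¬ mealyE δ lam (k + 1) s s') :
    mealyClsCount δ lam k < mealyClsCount δ lam (k + 1) := by
  set g : Set S → Set S := fun A => {t | ∃ u ∈ A, mealyE δ lam k u t} with hg
  have hgc : ∀ t : S, g (mealyCls δ lam (k + 1) t) = mealyCls δ lam k t := by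
    intro t
    ext z
    constructor
    · rintro ⟨u, hu, huz⟩
      exact mealyE_trans δ lam (mealyE_anti δ lam (Nat.le_succ k) hu) huz
    · intro hz
      exact ⟨t, mealyE_refl δ lam _ t, hz⟩
  have himg : Finset.univ.image (mealyCls δ lam k) =
      (Finset.univ.image (mealyCls δ lam (k + 1))).image g := by
    rw [Finset.image_image]
    apply Finset.image_congr
    intro t _
    exact (hgc t).symm
  have hxy : mealyCls δ lam (k + 1) s ≠ mealyCls δ lam (k + 1) s' := by
    intro heq
    apply h'
    have : s' ∈ mealyCls δ lam (k + 1) s' := mealyE_refl δ lam _ s'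
    rw [← heq] at this
    exact this
  have hfxy : g (mealyCls δ lam (k + 1) s) = g (mealyCls δ lam (k + 1) s') := by
    rw [hgc s, hgc s']
    exact mealyCls_eq_of δ lam h
  have := card_image_lt_of_not_injOn
    (s := Finset.univ.image (mealyCls δ lam (k + 1))) (f := g)
    (Finset.mem_image_of_mem _ (Finset.mem_univ s))
    (Finset.mem_image_of_mem _ (Finset.mem_univ s')) hxy hfxy
  unfold mealyClsCount
  rw [himg]
  exact this

lemma exists_stable [Fintype S] (hS : 1 ≤ Fintype.card S) :
    ∃ k < Fintype.card S,
      ∀ s s' : S, mealyE δ lam k s s' → mealyE δ lam (k + 1) s s' := by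
  by_contra hcon
  push_neg at hcon
  have hone : ∀ k, 1 ≤ mealyClsCount δ lam (k : ℕ) := by
    intro k
    obtain ⟨s⟩ := Fintype.card_pos_iff.mp hS
    apply Finset.card_pos.2
    exact ⟨mealyCls δ lam k s, Finset.mem_image_of_mem _ (Finset.mem_univ s)⟩
  have key : ∀ m, m ≤ Fintype.card S → m + 1 ≤ mealyClsCount δ lam m := by
    intro m
    induction m with
    | zero => intro _; exact hone 0
    | succ m ih =>
      intro hm
      obtain ⟨s, s', hE, hnE⟩ := hcon m (by omega)
      have h1 := ih (by omega)
      have h2 := mealyClsCount_lt δ lam hE hnE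
      omega
  have h1 := key (Fintype.card S) le_rfl
  have h2 := mealyClsCount_le δ lam (S := S) (Fintype.card S)
  omega

/-- Moore's bound: in a reduced machine, distinct states are distinguished by a word
of length at most `card S - 1`. -/
lemma moore [Fintype S]
    (hreduced : ∀ s s' : S, s ≠ s' →
      ∃ w : List I, mealyLambda δ lam s w ≠ mealyLambda δ lam s' w)
    {s s' : S} (hss : s ≠ s') :
    ∃ w : List I, w.length ≤ Fintype.card S - 1 ∧
      mealyLambda δ lam s w ≠ mealyLambda δ lam s' w := by
  have hS : 1 ≤ Fintype.card S := Fintype.card_pos_iff.mpr ⟨s⟩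
  obtain ⟨k, hk, hstab⟩ := exists_stable δ lam hS
  obtain ⟨w0, hw0⟩ := hreduced s s' hss
  have hnE : ¬ mealyE δ lam w0.length s s' := fun h => hw0 (h w0 le_rfl)
  have hnE' : ¬ mealyE δ lam (Fintype.card S - 1) s s' := by
    intro h
    apply hnE
    by_cases hc : w0.length ≤ Fintype.card S - 1
    · exact mealyE_anti δ lam hc h
    · have hkle : k ≤ Fintype.card S - 1 := by omega
      have hE : mealyE δ lam k s s' := mealyE_anti δ lam hkle h
      have := mealyE_stable δ lam hstab (w0.length - k) s s' hE
      have hkw : k + (w0.length - k) = w0.length := by omega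
      rwa [hkw] at this
  rw [mealyE] at hnE'
  push_neg at hnE'
  obtain ⟨w, hwlen, hwne⟩ := hnE'
  exact ⟨w, hwlen, hwne⟩

end Aux

/-- Every reduced deterministic Mealy machine with `n` states has a homing sequence of
length at most `(n−1)²`: an input word `σ` such that whenever two states produce the
same output word on `σ`, they reach the same state after reading `σ`. -/
theorem exists_homing_sequence {S I O : Type*} [Fintype S]
    (n : ℕ) (hn : n = Fintype.card S)
    (δ : S → I → S) (lam : S → I → O)
    (hreduced : ∀ s s' : S, s ≠ s' →
      ∃ w : List I, mealyLambda δ lam s w ≠ mealyLambda δ lam s' w) :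
    ∃ σ : List I, σ.length ≤ (n - 1) ^ 2 ∧
      ∀ s s' : S, mealyLambda δ lam s σ = mealyLambda δ lam s' σ →
        mealyDelta δ s σ = mealyDelta δ s' σ := by
  classical
  rcases Nat.eq_zero_or_pos (Fintype.card S) with hS0 | hS
  · refine ⟨[], by simp, fun s s' _ => ?_⟩
    have : IsEmpty S := Fintype.card_eq_zero_iff.mp hS0
    exact this.elim s
  -- output count of a word
  set c : List I → ℕ := fun σ => (Finset.univ.image (fun s => mealyLambda δ lam s σ)).card
    with hc
  have key : ∀ m : ℕ, ∃ σ : List I, σ.length ≤ m * (Fintype.card S - 1) ∧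
      ((∀ s s' : S, mealyLambda δ lam s σ = mealyLambda δ lam s' σ →
        mealyDelta δ s σ = mealyDelta δ s' σ) ∨ m + 1 ≤ c σ) := by
    intro m
    induction m with
    | zero =>
      refine ⟨[], by simp, Or.inr ?_⟩
      obtain ⟨s⟩ := Fintype.card_pos_iff.mp hS
      exact Finset.card_pos.2 ⟨_, Finset.mem_image_of_mem _ (Finset.mem_univ s)⟩
    | succ m ih =>
      obtain ⟨σ, hlen, hcase⟩ := ih
      by_cases hhom : ∀ s s' : S, mealyLambda δ lam s σ = mealyLambda δ lam s' σ →
          mealyDelta δ s σ = mealyDelta δ s' σ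
      · exact ⟨σ, hlen.trans (by nlinarith), Or.inl hhom⟩
      rcases hcase with hcase | hcount
      · exact absurd hcase hhom
      push_neg at hhom
      obtain ⟨s, s', hlameq, hdne⟩ := hhom
      obtain ⟨w, hwlen, hwne⟩ := moore δ lam hreduced hdne
      refine ⟨σ ++ w, ?_, Or.inr ?_⟩
      · simp only [List.length_append]
        have : (m + 1) * (Fintype.card S - 1) =
            m * (Fintype.card S - 1) + (Fintype.card S - 1) := by ring
        omega
      · -- strict increase of c
        have htake : ∀ t : S, (mealyLambda δ lam t (σ ++ w)).take σ.length =
            mealyLambda δ lam t σ := by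
          intro t
          rw [mealyLambda_append]
          rw [show σ.length = (mealyLambda δ lam t σ).length from
            (mealyLambda_length δ lam t σ).symm]
          exact List.take_left
        have hximg : Finset.univ.image (fun t => mealyLambda δ lam t σ) =
            (Finset.univ.image (fun t => mealyLambda δ lam t (σ ++ w))).image
              (fun l => l.take σ.length) := by
          rw [Finset.image_image]
          apply Finset.image_congr
          intro t _
          exact (htake t).symm
        have hxy : mealyLambda δ lam s (σ ++ w) ≠ mealyLambda δ lam s' (σ ++ w) := by
          rw [mealyLambda_append, mealyLambda_append, hlameq]
          intro hcontra
          exact hwne (List.append_cancel_left hcontra)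
        have hfxy : (mealyLambda δ lam s (σ ++ w)).take σ.length =
            (mealyLambda δ lam s' (σ ++ w)).take σ.length := by
          rw [htake s, htake s', hlameq]
        have hlt := card_image_lt_of_not_injOn
          (s := Finset.univ.image (fun t => mealyLambda δ lam t (σ ++ w)))
          (f := fun l => l.take σ.length)
          (Finset.mem_image_of_mem _ (Finset.mem_univ s))
          (Finset.mem_image_of_mem _ (Finset.mem_univ s')) hxy hfxy
        have : c σ < c (σ ++ w) := by
          simp only [hc]
          rw [hximg]
          exact hlt
        omega
  obtain ⟨σ, hlen, hcase⟩ := key (Fintype.card S - 1)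
  refine ⟨σ, ?_, ?_⟩
  · rw [hn]
    calc σ.length ≤ (Fintype.card S - 1) * (Fintype.card S - 1) := hlen
      _ = (Fintype.card S - 1) ^ 2 := (sq _).symm
  · rcases hcase with h | hcount
    · exact h
    · -- c σ ≥ card S, so λ*( ·, σ) is injective
      have hcard : Fintype.card S ≤ c σ := by omega
      have hle : c σ ≤ Finset.univ.card := Finset.card_image_le
      have heq : (Finset.univ.image (fun s => mealyLambda δ lam s σ)).card =
          Finset.univ.card := le_antisymm hle (by
            rw [Finset.card_univ]; exact hcard)
      have hinj := Finset.injOn_of_card_image_eq heq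
      intro s s' hll
      have : s = s' := hinj (Finset.mem_coe.2 (Finset.mem_univ s))
        (Finset.mem_coe.2 (Finset.mem_univ s')) hll
      rw [this]
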